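/- With U(x,λ) = W(λδ_x, 0) and the regularized field φ_λ(x) := (1/(2iλ))(U(x,λ) − U(x,λ)*) for λ > 0, the polymer state ω₀ of the previous context satisfies ω₀(φ_λ(x) φ_{λ'}(x')) = (1/(2λ²))(𝟙[λ = λ'] + 𝟙[λ = −λ']) 𝟙[x = x'] and in particular ω₀(φ_λ(x) φ_{λ'}(x')) = 0 whenever x ≠ x' or |λ| ≠ |λ'|. -/

import Mathlib

open Classical

/-- The polymer state on Weyl generators with trivial second slot:
`Ω(a) = ω₀(W(a,0)) = 1` if `a = 0`, else `0`. -/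

noncomputable def polymerOmega {S : Type*} (a : S →₀ ℝ) : ℂ :=
  if a = 0 then 1 else 0

/-- With point-holonomies `U(x,λ) = W(λδ_x, 0)`, `U(x,λ)* = U(x,−λ)`,
`U(x,λ)U(x',λ') = W(λδ_x + λ'δ_{x'}, 0)` (the Weyl phase vanishes), and the
regularized field `φ_λ(x) = (1/(2iλ))(U(x,λ) − U(x,λ)*)` for `λ > 0`, the
polymer state `ω₀` satisfies
`ω₀(φ_λ(x)φ_{λ'}(x')) = (1/(2λ²))(𝟙[λ=λ'] + 𝟙[λ=−λ']) 𝟙[x=x']`;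
in particular it vanishes whenever `x ≠ x'` or `|λ| ≠ |λ'|`. -/
theorem polymer_regularized_two_point {S : Type*} [DecidableEq S]
    (x x' : S) (lam lam' : ℝ) (hlam : 0 < lam) (hlam' : 0 < lam') :
    ((1 / (2 * Complex.I * (lam : ℂ))) * (1 / (2 * Complex.I * (lam' : ℂ))) *
        (polymerOmega (Finsupp.single x lam + Finsupp.single x' lam')
          - polymerOmega (Finsupp.single x lam - Finsupp.single x' lam')
          - polymerOmega (-Finsupp.single x lam + Finsupp.single x' lam')
          + polymerOmega (-Finsupp.single x lam - Finsupp.single x' lam'))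
      = (1 / (2 * (lam : ℂ) ^ 2)) *
          ((if lam = lam' then 1 else 0) + (if lam = -lam' then 1 else 0)) *
          (if x = x' then 1 else 0)) ∧
    ((x ≠ x' ∨ |lam| ≠ |lam'|) →
      (1 / (2 * Complex.I * (lam : ℂ))) * (1 / (2 * Complex.I * (lam' : ℂ))) *
        (polymerOmega (Finsupp.single x lam + Finsupp.single x' lam')
          - polymerOmega (Finsupp.single x lam - Finsupp.single x' lam')
          - polymerOmega (-Finsupp.single x lam + Finsupp.single x' lam')
          + polymerOmega (-Finsupp.single x lam - Finsupp.single x' lam')) = 0) := by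

  have hI : Complex.I ≠ 0 := Complex.I_ne_zero
  have hl : (lam : ℂ) ≠ 0 := by exact_mod_cast hlam.ne'
  have hl' : (lam' : ℂ) ≠ 0 := by exact_mod_cast hlam'.ne'
  have hsum : lam + lam' ≠ 0 := by positivity
  have hsum' : ¬ (-lam - lam' = 0) := by intro h; apply hsum; linarith
  have hmm : ¬ (lam = -lam') := by intro h; apply hsum; rw [h]; ring
  have main : (1 / (2 * Complex.I * (lam : ℂ))) * (1 / (2 * Complex.I * (lam' : ℂ))) *
        (polymerOmega (Finsupp.single x lam + Finsupp.single x' lam')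
          - polymerOmega (Finsupp.single x lam - Finsupp.single x' lam')
          - polymerOmega (-Finsupp.single x lam + Finsupp.single x' lam')
          + polymerOmega (-Finsupp.single x lam - Finsupp.single x' lam'))
      = (1 / (2 * (lam : ℂ) ^ 2)) *
          ((if lam = lam' then 1 else 0) + (if lam = -lam' then 1 else 0)) *
          (if x = x' then 1 else 0) := by
    by_cases hx : x = x'
    · subst hx
      simp only [polymerOmega, sub_eq_add_neg, ← Finsupp.single_neg, ← Finsupp.single_add,
        Finsupp.single_eq_zero, hsum, if_false, if_neg hmm, if_pos rfl]
      by_cases he : lam = lam'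
      · subst he
        have h1 : lam + -lam = 0 := by ring
        have h2 : -lam + lam = 0 := by ring
        have h3 : ¬ (-lam + -lam = 0) := by intro h; apply hsum; linarith
        rw [if_pos h1, if_pos h2, if_pos rfl, if_neg h3]
        field_simp
        simp only [if_true]
        linear_combination (-2 : ℂ) * Complex.I_mul_I
      · have h1 : ¬ (lam + -lam' = 0) := by intro h; apply he; linarith
        have h2 : ¬ (-lam + lam' = 0) := by intro h; apply he; linarith
        have h3 : ¬ (-lam + -lam' = 0) := by intro h; apply hsum; linarith
        rw [if_neg h1, if_neg h2, if_neg he, if_neg h3]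
        ring
    · have key : ∀ a b : ℝ, a ≠ 0 → Finsupp.single x a + Finsupp.single x' b ≠ 0 := by
        intro a b ha h
        have h2 := DFunLike.congr_fun h x
        rw [Finsupp.add_apply, Finsupp.single_eq_same,
          Finsupp.single_eq_of_ne' (fun hh => hx hh.symm), Finsupp.zero_apply, add_zero] at h2
        exact ha h2
      simp only [polymerOmega, sub_eq_add_neg, ← Finsupp.single_neg]
      rw [if_neg (key _ _ hlam.ne'), if_neg (key _ _ hlam.ne'),
        if_neg (key _ _ (neg_ne_zero.mpr hlam.ne')), if_neg (key _ _ (neg_ne_zero.mpr hlam.ne')),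
        if_neg hx]
      ring
  refine ⟨main, fun h => ?_⟩
  rw [main]
  rcases h with h | h
  · rw [if_neg h]; ring
  · have h1 : ¬ (lam = lam') := fun he => h (by rw [he])
    have h2 : ¬ (lam = -lam') := hmm
    rw [if_neg h1, if_neg h2]; ring
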